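/- Let $L$ be a $p$-linearized polynomial over $\mathbb{F}_p$ without multiple roots, and suppose $S_k^{2k} = L \circ L'$ for a $p$-linearized polynomial $L'$. Let $d = \gcd(n,k)$, $w = \gcd(l', t_d^k)$, $u = l'/w$, and $U$ the linearized $p$-associate of $u$. Then the set of roots of $L$ in $\mathbb{F}_{p^n}$ equals $U(\mathbb{F}_{p^d})$. -/

import Mathlib

open Polynomial

noncomputable def Tpoly (p l k : ℕ) : Polynomial (ZMod p) :=
  ∑ i ∈ Finset.range (k / l), X ^ p ^ (l * i)

noncomputable def Spoly (p l k : ℕ) : Polynomial (ZMod p) :=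
  ∑ i ∈ Finset.range (k / l), C ((-1 : ZMod p) ^ i) * X ^ p ^ (l * i)

noncomputable def linAssoc (p : ℕ) (l : Polynomial (ZMod p)) : Polynomial (ZMod p) :=
  ∑ i ∈ l.support, C (l.coeff i) * X ^ p ^ i

namespace LinAux
variable {p : ℕ} [Fact p.Prime]

theorem lin_eq_range (g : Polynomial (ZMod p)) {N : ℕ} (h : g.natDegree < N) :
    linAssoc p g = ∑ i ∈ Finset.range N, C (g.coeff i) * X ^ p ^ i := by
  rw [linAssoc]
  refine Finset.sum_subset (fun i hi => Finset.mem_range.2 ?_) (fun i _ hi => ?_)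
  · exact lt_of_le_of_lt (le_natDegree_of_mem_supp i hi) h
  · rw [notMem_support_iff.mp hi]; simp

theorem lin_zero : linAssoc p 0 = 0 := by simp [linAssoc]

theorem lin_add (a b : Polynomial (ZMod p)) :
    linAssoc p (a + b) = linAssoc p a + linAssoc p b := by
  set N := max a.natDegree b.natDegree + 1 with hN
  rw [lin_eq_range a (by omega : a.natDegree < N),
      lin_eq_range b (by omega : b.natDegree < N),
      lin_eq_range (a+b) (lt_of_le_of_lt (natDegree_add_le a b) (Nat.lt_succ_self _)),
      ← Finset.sum_add_distrib]
  refine Finset.sum_congr rfl fun i _ => ?_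
  rw [coeff_add, C_add, add_mul]

theorem lin_Cmul (c : ZMod p) (a : Polynomial (ZMod p)) :
    linAssoc p (C c * a) = C c * linAssoc p a := by
  rw [lin_eq_range a (Nat.lt_succ_self _),
      lin_eq_range (C c * a) (lt_of_le_of_lt (natDegree_C_mul_le c a) (Nat.lt_succ_self _)),
      Finset.mul_sum]
  refine Finset.sum_congr rfl fun i _ => ?_
  rw [coeff_C_mul, C_mul, mul_assoc]

theorem lin_neg (a : Polynomial (ZMod p)) : linAssoc p (-a) = - linAssoc p a := by
  have := lin_Cmul (-1) a
  simpa using this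

theorem lin_sub (a b : Polynomial (ZMod p)) :
    linAssoc p (a - b) = linAssoc p a - linAssoc p b := by
  rw [sub_eq_add_neg, lin_add, lin_neg, sub_eq_add_neg]

theorem lin_one : linAssoc p 1 = X := by
  rw [lin_eq_range 1 (by simp : (1 : Polynomial (ZMod p)).natDegree < 1)]
  simp

theorem lin_X_pow (m : ℕ) : linAssoc p (X ^ m) = X ^ p ^ m := by
  rw [lin_eq_range (X ^ m) (by simp : (X ^ m : Polynomial (ZMod p)).natDegree < m + 1)]
  rw [Finset.sum_eq_single m]
  · simp
  · intro i _ hi; simp [coeff_X_pow, hi]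
  · intro hm; exact absurd (Finset.self_mem_range_succ m) hm

theorem lin_X_pow_sub_one (m : ℕ) :
    linAssoc p (X ^ m - 1) = X ^ p ^ m - X := by
  rw [lin_sub, lin_one, lin_X_pow]

theorem lin_pow_p (a : Polynomial (ZMod p)) :
    (linAssoc p a) ^ p = linAssoc p (X * a) := by
  have hp : p.Prime := Fact.out
  rw [lin_eq_range a (Nat.lt_succ_self _), sum_pow_char,
      lin_eq_range (X * a) (N := a.natDegree + 1 + 1) (lt_of_le_of_lt (natDegree_mul_le)
        (by simp [natDegree_X]; omega : (X : Polynomial (ZMod p)).natDegree + a.natDegree < a.natDegree + 1 + 1))]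
  conv_rhs => rw [Finset.sum_range_succ']
  have h0 : (X * a).coeff 0 = 0 := by
    rw [mul_comm, coeff_mul_X_zero]
  rw [h0]
  simp only [map_zero, zero_mul, add_zero]
  refine Finset.sum_congr rfl fun i _ => ?_
  rw [coeff_X_mul, mul_pow, ← C_pow, ZMod.pow_card, ← pow_mul, ← pow_succ]

theorem lin_pow_pow (a : Polynomial (ZMod p)) (i : ℕ) :
    (linAssoc p a) ^ p ^ i = linAssoc p (X ^ i * a) := by
  induction i with
  | zero => simp
  | succ i ih =>
      rw [pow_succ, pow_mul, ih, lin_pow_p, ← mul_assoc, ← pow_succ']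

theorem lin_sum {ι : Type*} (s : Finset ι) (f : ι → Polynomial (ZMod p)) :
    linAssoc p (∑ i ∈ s, f i) = ∑ i ∈ s, linAssoc p (f i) := by
  classical
  induction s using Finset.induction_on with
  | empty => simp [lin_zero]
  | insert x s' hx ih => rw [Finset.sum_insert hx, lin_add, ih, Finset.sum_insert hx]

theorem lin_mul (a b : Polynomial (ZMod p)) :
    linAssoc p (a * b) = (linAssoc p a).comp (linAssoc p b) := by
  conv_lhs => rw [as_sum_range' a (a.natDegree + 1) (Nat.lt_succ_self _)]
  rw [lin_eq_range a (Nat.lt_succ_self _)]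
  rw [Finset.sum_mul, lin_sum, comp, eval₂_finset_sum]
  refine Finset.sum_congr rfl fun i _ => ?_
  rw [← C_mul_X_pow_eq_monomial, mul_assoc, lin_Cmul, ← lin_pow_pow]
  rw [← comp, mul_comp, C_comp, X_pow_comp]

theorem coeff_lin (g : Polynomial (ZMod p)) (i : ℕ) :
    (linAssoc p g).coeff (p ^ i) = g.coeff i := by
  have hp : 1 < p := (Fact.out : p.Prime).one_lt
  rw [lin_eq_range g (show g.natDegree < max g.natDegree i + 1 by omega), finset_sum_coeff,
    Finset.sum_eq_single i]
  · simp
  · intro j _ hj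
    rw [coeff_C_mul, coeff_X_pow, if_neg, mul_zero]
    exact fun hh => hj ((Nat.pow_right_injective hp hh).symm)
  · intro hmem
    exact absurd (Finset.mem_range.2 (by omega)) hmem

theorem lin_inj {a b : Polynomial (ZMod p)} (h : linAssoc p a = linAssoc p b) : a = b := by
  ext i
  rw [← coeff_lin a i, ← coeff_lin b i, h]

end LinAux

namespace LinAux
variable {p : ℕ} [Fact p.Prime]

noncomputable def Frob (p n : ℕ) [Fact p.Prime] :
    Module.End (ZMod p) (GaloisField p n) where
  toFun x := x ^ p
  map_add' x y := add_pow_char x y p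
  map_smul' c x := by
    simp only [RingHom.id_apply, Algebra.smul_def, mul_pow, ← map_pow, ZMod.pow_card]

theorem Frob_pow_apply (n : ℕ) (i : ℕ) (x : GaloisField p n) :
    (Frob p n ^ i) x = x ^ p ^ i := by
  induction i generalizing x with
  | zero => simp
  | succ i ih =>
      rw [pow_succ, Module.End.mul_apply]
      show (Frob p n ^ i) (x ^ p) = _
      rw [ih (x ^ p), ← pow_mul, ← pow_succ']

theorem aeval_lin (n : ℕ) (g : Polynomial (ZMod p)) (x : GaloisField p n) :
    aeval x (linAssoc p g) = aeval (Frob p n) g x := by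
  conv_rhs => rw [aeval_eq_sum_range (p := g) (Frob p n)]
  rw [lin_eq_range g (Nat.lt_succ_self _), map_sum, LinearMap.coe_sum, Finset.sum_apply]
  refine Finset.sum_congr rfl fun i _ => ?_
  rw [map_mul, aeval_C, map_pow, aeval_X, LinearMap.smul_apply, Frob_pow_apply,
    Algebra.smul_def]

/-- kernel of the action of `g` -/
noncomputable def K (p n : ℕ) [Fact p.Prime] (g : Polynomial (ZMod p)) :
    Submodule (ZMod p) (GaloisField p n) :=
  LinearMap.ker (aeval (Frob p n) g)

theorem K_mono {n : ℕ} {a b : Polynomial (ZMod p)} (hab : a ∣ b) : K p n a ≤ K p n b := by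
  obtain ⟨c, rfl⟩ := hab
  intro x hx
  have hx' : aeval (Frob p n) a x = 0 := hx
  show aeval (Frob p n) (a * c) x = 0
  rw [mul_comm, map_mul, Module.End.mul_apply, hx', map_zero]

theorem K_gcd (n : ℕ) (a b : Polynomial (ZMod p)) :
    K p n (gcd a b) = K p n a ⊓ K p n b := by
  refine le_antisymm (le_inf (K_mono (gcd_dvd_left a b)) (K_mono (gcd_dvd_right a b))) ?_
  rintro x ⟨hxa, hxb⟩
  have hmem : gcd a b ∈ Ideal.span {a, b} := by
    rw [← span_gcd]; exact Ideal.subset_span rfl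
  obtain ⟨s, t, hst⟩ := Ideal.mem_span_pair.mp hmem
  show aeval (Frob p n) (gcd a b) x = 0
  have hxa' : aeval (Frob p n) a x = 0 := hxa
  have hxb' : aeval (Frob p n) b x = 0 := hxb
  rw [← hst, map_add, map_mul, map_mul, LinearMap.add_apply, Module.End.mul_apply,
    Module.End.mul_apply, hxa', hxb', map_zero, map_zero, add_zero]

theorem lin_dvd_big {n : ℕ} (hn : 0 < n) {g : Polynomial (ZMod p)}
    (hg : g ∣ (X ^ n - 1 : Polynomial (ZMod p))) :
    linAssoc p g ∣ (X ^ p ^ n - X : Polynomial (ZMod p)) := by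
  obtain ⟨c, hc⟩ := hg
  have h1 : linAssoc p (c * g) = (linAssoc p c).comp (linAssoc p g) := lin_mul c g
  have hp0 : 0 < p := (Fact.out : p.Prime).pos
  have h2 : X ∣ linAssoc p c := by
    rw [X_dvd_iff, lin_eq_range c (Nat.lt_succ_self _), finset_sum_coeff]
    refine Finset.sum_eq_zero fun i _ => ?_
    rw [coeff_C_mul, coeff_X_pow, if_neg ((pow_pos hp0 i).ne), mul_zero]
  obtain ⟨q, hq⟩ := h2
  refine ⟨q.comp (linAssoc p g), ?_⟩
  rw [← lin_X_pow_sub_one n, hc, mul_comm g c, lin_mul, hq, mul_comp, X_comp]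

end LinAux

namespace LinAux
variable {p : ℕ} [Fact p.Prime]

theorem natDegree_lin {g : Polynomial (ZMod p)} (hg : g ≠ 0) :
    (linAssoc p g).natDegree = p ^ g.natDegree := by
  have hp : 1 < p := (Fact.out : p.Prime).one_lt
  apply le_antisymm
  · rw [lin_eq_range g (Nat.lt_succ_self _)]
    refine natDegree_sum_le_of_forall_le _ _ fun i hi => ?_
    refine le_trans (natDegree_C_mul_le _ _) ?_
    rw [natDegree_X_pow]
    exact Nat.pow_le_pow_right (by omega) (Nat.lt_succ_iff.mp (Finset.mem_range.mp hi))
  · apply le_natDegree_of_ne_zero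
    rw [coeff_lin, ← leadingCoeff]
    exact leadingCoeff_ne_zero.mpr hg

theorem lin_ne_zero {g : Polynomial (ZMod p)} (hg : g ≠ 0) : linAssoc p g ≠ 0 := by
  intro hh
  exact hg (lin_inj (hh.trans lin_zero.symm))

theorem card_K {n : ℕ} (hn : 0 < n) {g : Polynomial (ZMod p)}
    (hg : g ∣ (X ^ n - 1 : Polynomial (ZMod p))) (hg0 : g ≠ 0) :
    Nat.card (K p n g) = p ^ g.natDegree := by
  classical
  have hp : p.Prime := Fact.out
  set F := GaloisField p n with hF
  haveI : Fintype F := Fintype.ofFinite _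
  have hcard : Fintype.card F = p ^ n := by
    rw [← Nat.card_eq_fintype_card, hF, GaloisField.card p n hn.ne']
  set G : Polynomial (ZMod p) := linAssoc p g with hG
  have hGdvd : G ∣ (X ^ p ^ n - X : Polynomial (ZMod p)) := lin_dvd_big hn hg
  -- separability of the big polynomial over ZMod p
  have hsep : (X ^ p ^ n - X : Polynomial (ZMod p)).Separable :=
    galois_poly_separable p (p ^ n) (dvd_pow_self p hn.ne')
  have hGsep : G.Separable := by
    rw [PerfectField.separable_iff_squarefree] at hsep ⊢
    exact hsep.squarefree_of_dvd hGdvd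
  -- move to F
  set φ := algebraMap (ZMod p) F
  set Gm : Polynomial F := G.map φ with hGm
  have hGm0 : Gm ≠ 0 := (Polynomial.map_ne_zero_iff (algebraMap (ZMod p) F).injective).mpr
    (lin_ne_zero hg0)
  have hGmsep : Gm.Separable := hGsep.map
  have hbig : (X ^ p ^ n - X : Polynomial F).roots = (Finset.univ : Finset F).val := by
    have := FiniteField.roots_X_pow_card_sub_X F
    rwa [hcard] at this
  have hbig0 : (X ^ p ^ n - X : Polynomial F) ≠ 0 :=
    FiniteField.X_pow_card_sub_X_ne_zero F (Nat.one_lt_pow hn.ne' hp.one_lt)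
  have hbigdeg : (X ^ p ^ n - X : Polynomial F).natDegree = p ^ n :=
    FiniteField.X_pow_card_sub_X_natDegree_eq F (Nat.one_lt_pow hn.ne' hp.one_lt)
  have hbigsplits : Splits (X ^ p ^ n - X : Polynomial F) := by
    rw [splits_iff_card_roots, hbig, hbigdeg]
    show Finset.univ.card = p ^ n
    rw [Finset.card_univ]; exact hcard
  have hGmdvd : Gm ∣ (X ^ p ^ n - X : Polynomial F) := by
    have := Polynomial.map_dvd φ hGdvd
    rwa [Polynomial.map_sub, Polynomial.map_pow, Polynomial.map_X] at this
  have hGmsplits : Splits Gm :=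
    hbigsplits.of_dvd hbig0 hGmdvd
  have hroots_card : Multiset.card Gm.roots = Gm.natDegree := splits_iff_card_roots.mp hGmsplits
  have hnodup : Gm.roots.Nodup := nodup_roots hGmsep
  -- identify K with root set
  have hKset : (K p n g : Set F) = ↑Gm.roots.toFinset := by
    ext x
    simp only [Finset.coe_sort_coe, Multiset.mem_toFinset, Finset.mem_coe, SetLike.mem_coe]
    rw [mem_roots_map (lin_ne_zero hg0)]
    show x ∈ K p n g ↔ _
    rw [K, LinearMap.mem_ker, ← aeval_lin]
    rw [aeval_def]
  have h1 : Nat.card (K p n g) = Gm.roots.toFinset.card := by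
    have e1 : Nat.card (K p n g) = ((K p n g : Set F)).ncard := Nat.card_coe_set_eq _
    rw [e1, hKset, Set.ncard_coe_finset]
  rw [h1, Multiset.toFinset_card_of_nodup hnodup, hroots_card, hGm,
    natDegree_map, hG, natDegree_lin hg0]

end LinAux

namespace LinAux
variable {p : ℕ} [Fact p.Prime]

theorem card_image_ker {R M : Type*} [Field R] [AddCommGroup M] [Module R M] [Finite M]
    (f : M →ₗ[R] M) (Kd : Submodule R M) :
    Nat.card Kd = Nat.card ↥(LinearMap.ker f ⊓ Kd) * Nat.card ↑(⇑f '' ↑Kd) := by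
  classical
  set g := f.domRestrict Kd with hg
  have h1 : Nat.card Kd = Nat.card (LinearMap.ker g) * Nat.card (↥Kd ⧸ LinearMap.ker g) :=
    Submodule.card_eq_card_quotient_mul_card _
  have h2 : Nat.card (↥Kd ⧸ LinearMap.ker g) = Nat.card (LinearMap.range g) :=
    Nat.card_congr (LinearMap.quotKerEquivRange g).toEquiv
  have h3 : LinearMap.range g = Submodule.map f Kd := LinearMap.range_domRestrict Kd f
  have h4 : Nat.card (LinearMap.range g) = Nat.card ↑(⇑f '' ↑Kd) := by
    rw [h3]
    have : (Submodule.map f Kd : Set M) = ⇑f '' ↑Kd := Submodule.map_coe f Kd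
    rw [← this]
    rfl
  have h5 : LinearMap.ker g = Submodule.comap Kd.subtype (LinearMap.ker f ⊓ Kd) := by
    rw [hg, LinearMap.ker_domRestrict, Submodule.comap_inf, Submodule.comap_subtype_self,
      inf_top_eq]
  have h6 : Nat.card (LinearMap.ker g) = Nat.card ↥(LinearMap.ker f ⊓ Kd) := by
    rw [h5]
    exact Nat.card_congr (Submodule.comapSubtypeEquivOfLe inf_le_right).toEquiv
  rw [h1, h2, h4, h6]

theorem dvd_X_pow_gcd (r : Polynomial (ZMod p)) :
    ∀ a b : ℕ, r ∣ X ^ a - 1 → r ∣ X ^ b - 1 → r ∣ X ^ Nat.gcd a b - 1 := by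
  intro a
  induction a using Nat.strong_induction_on with
  | _ a IH =>
    intro b h1 h2
    rcases Nat.eq_zero_or_pos a with rfl | ha
    · rwa [Nat.gcd_zero_left]
    · rw [Nat.gcd_rec]
      have hmod : b % a < a := Nat.mod_lt b ha
      have hident : (X : Polynomial (ZMod p)) ^ b - 1 =
          X ^ (b % a) * (X ^ (a * (b / a)) - 1) + (X ^ (b % a) - 1) := by
        ring_nf
        rw [← pow_add]
        rw [Nat.mod_add_div]
      have hdvd1 : r ∣ (X : Polynomial (ZMod p)) ^ (a * (b / a)) - 1 := by
        refine h1.trans ?_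
        have := sub_dvd_pow_sub_pow ((X : Polynomial (ZMod p)) ^ a) 1 (b / a)
        rwa [← pow_mul, one_pow] at this
      have hdvd2 : r ∣ (X : Polynomial (ZMod p)) ^ (b % a) - 1 := by
        have : (X : Polynomial (ZMod p)) ^ (b % a) - 1 =
            (X ^ b - 1) - X ^ (b % a) * (X ^ (a * (b / a)) - 1) := by
          rw [hident]; ring
        rw [this]
        exact dvd_sub h2 (Dvd.dvd.mul_left hdvd1 _)
      exact IH (b % a) hmod a hdvd2 h1

end LinAux

open LinAux in
theorem stmt9 (p : ℕ) [Fact p.Prime] (n k : ℕ) (hn : 0 < n) (hk : 0 < k)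
    (l l' : Polynomial (ZMod p)) (hsqf : Squarefree (linAssoc p l))
    (h : (linAssoc p l).comp (linAssoc p l') = X - X ^ p ^ k)
    (d : ℕ) (hd : d = Nat.gcd n k)
    (t w u : Polynomial (ZMod p))
    (ht : t = ∑ i ∈ Finset.range (k / d), X ^ (d * i))
    (hw : w = gcd l' t) (hu : u = l' / w) :
    {x : GaloisField p n | aeval x (linAssoc p l) = 0} =
      (fun x => aeval x (linAssoc p u)) '' {x : GaloisField p n | x ^ p ^ d = x} := by
  classical
  have hp : p.Prime := Fact.out
  have hd0 : 0 < d := hd ▸ Nat.gcd_pos_of_pos_left _ hn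
  have hdk : d ∣ k := hd ▸ Nat.gcd_dvd_right n k
  have hdn : d ∣ n := hd ▸ Nat.gcd_dvd_left n k
  -- the key polynomial identity
  have hkey : l * l' = 1 - X ^ k := by
    apply lin_inj (p := p)
    rw [lin_mul, h, lin_sub, lin_one, lin_X_pow]
  have ht' : t * (X ^ d - 1) = X ^ k - 1 := by
    rw [ht]
    have e : ∀ i ∈ Finset.range (k / d), (X : Polynomial (ZMod p)) ^ (d * i) = (X ^ d) ^ i :=
      fun i _ => by rw [← pow_mul]
    rw [Finset.sum_congr rfl e, geom_sum_mul, ← pow_mul, Nat.mul_div_cancel' hdk]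
  have hXk0 : (1 - X ^ k : Polynomial (ZMod p)) ≠ 0 := by
    intro hh
    have : (1 - X ^ k : Polynomial (ZMod p)).coeff k = 0 := by rw [hh]; simp
    rw [coeff_sub, coeff_one, coeff_X_pow, if_neg hk.ne', if_pos rfl] at this
    simp at this
  have hl0 : l ≠ 0 := fun h0 => hXk0 (by rw [← hkey, h0, zero_mul])
  have hl'0 : l' ≠ 0 := fun h0 => hXk0 (by rw [← hkey, h0, mul_zero])
  have hXd0 : (X ^ d - 1 : Polynomial (ZMod p)) ≠ 0 := by
    have := monic_X_pow_sub_C (1 : ZMod p) hd0.ne'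
    rw [C_1] at this
    exact this.ne_zero
  have hXn0 : (X ^ n - 1 : Polynomial (ZMod p)) ≠ 0 := by
    have := monic_X_pow_sub_C (1 : ZMod p) hn.ne'
    rw [C_1] at this
    exact this.ne_zero
  have hdegXd : (X ^ d - 1 : Polynomial (ZMod p)).natDegree = d := by
    rw [← C_1, natDegree_X_pow_sub_C]
  have hXk1 : (X ^ k - 1 : Polynomial (ZMod p)) ≠ 0 := by
    have := monic_X_pow_sub_C (1 : ZMod p) hk.ne'
    rw [C_1] at this
    exact this.ne_zero
  have ht0 : t ≠ 0 := by
    intro h0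
    rw [h0, zero_mul] at ht'
    exact hXk1 ht'.symm
  have hw0 : w ≠ 0 := by
    rw [hw]
    intro h0
    exact hl'0 ((gcd_eq_zero_iff l' t).mp h0).1
  have hwl' : w ∣ l' := hw ▸ gcd_dvd_left l' t
  have hwt : w ∣ t := hw ▸ gcd_dvd_right l' t
  have hul' : l' = w * u := by rw [hu]; exact (EuclideanDomain.mul_div_cancel' hw0 hwl').symm
  set v := t / w with hv
  have hvt : t = w * v := (EuclideanDomain.mul_div_cancel' hw0 hwt).symm
  have hu0 : u ≠ 0 := fun h0 => hl'0 (by rw [hul', h0, mul_zero])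
  have hv0 : v ≠ 0 := fun h0 => ht0 (by rw [hvt, h0, mul_zero])
  -- coprimality of u and v
  have hcop : IsCoprime u v := by
    have hw2 : w = normalize w * gcd u v := by
      nth_rewrite 1 [hw]
      rw [hul', hvt, gcd_mul_left]
    have hguv0 : gcd u v ≠ 0 := by
      intro h0; rw [h0, mul_zero] at hw2; exact hw0 hw2
    have hdeg := congrArg degree hw2
    rw [degree_mul, degree_normalize, degree_eq_natDegree hw0, degree_eq_natDegree hguv0,
      ← Nat.cast_add, Nat.cast_inj] at hdeg
    have hdeg0 : (gcd u v).natDegree = 0 := by omega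
    obtain ⟨c, hc⟩ := natDegree_eq_zero.mp hdeg0
    have hc0 : c ≠ 0 := fun h0 => hguv0 (by rw [← hc, h0, map_zero])
    refine (gcd_isUnit_iff u v).mp ?_
    rw [← hc]
    exact isUnit_C.mpr (isUnit_iff_ne_zero.mpr hc0)
  have hlu : l * u = -((X ^ d - 1) * v) := by
    apply mul_left_cancel₀ hw0
    have h1 : l * (w * u) = 1 - X ^ k := by rw [← hul']; exact hkey
    have h2 : (w * v) * (X ^ d - 1) = X ^ k - 1 := by rw [← hvt]; exact ht'
    linear_combination h1 + h2
  have hudvd : u ∣ X ^ d - 1 := by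
    refine hcop.dvd_of_dvd_mul_right ?_
    have h3 : u ∣ l * u := dvd_mul_left u l
    rw [hlu, dvd_neg] at h3
    exact h3
  obtain ⟨m', hm'⟩ := hudvd
  have hm'0 : m' ≠ 0 := fun h0 => hXd0 (by rw [hm', h0, mul_zero])
  have hl : l = -(m' * v) := by
    apply mul_left_cancel₀ hu0
    linear_combination hlu - v * hm'
  -- degree computations
  have hdegu_le : u.natDegree ≤ d := by
    have := natDegree_le_of_dvd ⟨m', hm'⟩ hXd0
    rwa [hdegXd] at this
  have hdegm' : m'.natDegree = d - u.natDegree := by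
    have := congrArg natDegree hm'
    rw [hdegXd, natDegree_mul hu0 hm'0] at this
    omega
  have hg2 : (gcd u (X ^ d - 1 : Polynomial (ZMod p))).natDegree = u.natDegree := by
    have hgcd0 : gcd u (X ^ d - 1 : Polynomial (ZMod p)) ≠ 0 := by
      intro h0; exact hu0 ((gcd_eq_zero_iff _ _).mp h0).1
    exact le_antisymm (natDegree_le_of_dvd (gcd_dvd_left _ _) hu0)
      (natDegree_le_of_dvd (dvd_gcd dvd_rfl ⟨m', hm'⟩) hgcd0)
  have hldvdXk : l ∣ (X ^ k - 1 : Polynomial (ZMod p)) := by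
    refine ⟨-(w * u), ?_⟩
    have h1 : l * (w * u) = 1 - X ^ k := by rw [← hul']; exact hkey
    linear_combination h1
  have hXdXn : (X ^ d - 1 : Polynomial (ZMod p)) ∣ X ^ n - 1 := by
    have := sub_dvd_pow_sub_pow ((X : Polynomial (ZMod p)) ^ d) 1 (n / d)
    rwa [← pow_mul, one_pow, Nat.mul_div_cancel' hdn] at this
  have hgl0 : gcd l (X ^ n - 1 : Polynomial (ZMod p)) ≠ 0 := by
    intro h0; exact hl0 ((gcd_eq_zero_iff _ _).mp h0).1
  have hgld0 : gcd l (X ^ d - 1 : Polynomial (ZMod p)) ≠ 0 := by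
    intro h0; exact hl0 ((gcd_eq_zero_iff _ _).mp h0).1
  have hg1' : (gcd l (X ^ d - 1 : Polynomial (ZMod p))).natDegree = m'.natDegree := by
    have hm'dvd : m' ∣ gcd l (X ^ d - 1 : Polynomial (ZMod p)) :=
      dvd_gcd ⟨-v, by rw [hl]; ring⟩ ⟨u, by rw [hm']; ring⟩
    have hgdvd : gcd l (X ^ d - 1 : Polynomial (ZMod p)) ∣ m' := by
      have hq1 : gcd l (X ^ d - 1 : Polynomial (ZMod p)) ∣ m' * (-v) :=
        (gcd_dvd_left l _).trans (dvd_of_eq (by rw [hl]; ring))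
      have hq2 : gcd l (X ^ d - 1 : Polynomial (ZMod p)) ∣ m' * u :=
        (gcd_dvd_right l _).trans (dvd_of_eq (by rw [hm']; ring))
      have hq3 : gcd l (X ^ d - 1 : Polynomial (ZMod p)) ∣ normalize m' * gcd (-v) u := by
        rw [← gcd_mul_left]
        exact dvd_gcd hq1 hq2
      have hguv : IsUnit (gcd (-v) u) :=
        (gcd_isUnit_iff (-v) u).mpr (hcop.symm.neg_left)
      refine hq3.trans ?_
      rw [hguv.mul_right_dvd]
      exact normalize_dvd_iff.mpr dvd_rfl
    exact le_antisymm (natDegree_le_of_dvd hgdvd hm'0) (natDegree_le_of_dvd hm'dvd hgld0)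
  have hg1 : (gcd l (X ^ n - 1 : Polynomial (ZMod p))).natDegree = m'.natDegree := by
    rw [← hg1']
    have hq12 : gcd l (X ^ n - 1 : Polynomial (ZMod p)) ∣ gcd l (X ^ d - 1) := by
      refine dvd_gcd (gcd_dvd_left _ _) ?_
      have hxk : gcd l (X ^ n - 1 : Polynomial (ZMod p)) ∣ X ^ k - 1 :=
        (gcd_dvd_left _ _).trans hldvdXk
      have := dvd_X_pow_gcd (gcd l (X ^ n - 1 : Polynomial (ZMod p))) n k
        (gcd_dvd_right _ _) hxk
      rwa [← hd] at this
    have hq21 : gcd l (X ^ d - 1 : Polynomial (ZMod p)) ∣ gcd l (X ^ n - 1) :=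
      dvd_gcd (gcd_dvd_left _ _) ((gcd_dvd_right _ _).trans hXdXn)
    exact le_antisymm (natDegree_le_of_dvd hq12 hgld0) (natDegree_le_of_dvd hq21 hgl0)
  -- kernel descriptions
  haveI : Fintype (GaloisField p n) := Fintype.ofFinite _
  have hcardF : Fintype.card (GaloisField p n) = p ^ n := by
    rw [← Nat.card_eq_fintype_card, GaloisField.card p n hn.ne']
  have hKtop : K p n (X ^ n - 1 : Polynomial (ZMod p)) = ⊤ := by
    rw [eq_top_iff]
    intro x _
    show aeval (Frob p n) (X ^ n - 1 : Polynomial (ZMod p)) x = 0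
    rw [map_sub, map_pow, aeval_X, map_one, LinearMap.sub_apply, Module.End.one_apply,
      Frob_pow_apply, ← hcardF, FiniteField.pow_card, sub_self]
  have hAset : {x : GaloisField p n | aeval x (linAssoc p l) = 0} = ↑(K p n l) := by
    ext x
    rw [Set.mem_setOf_eq, SetLike.mem_coe, K, LinearMap.mem_ker, aeval_lin]
  have hSset : {x : GaloisField p n | x ^ p ^ d = x} = ↑(K p n (X ^ d - 1)) := by
    ext x
    rw [Set.mem_setOf_eq, SetLike.mem_coe, K, LinearMap.mem_ker, map_sub, map_pow, aeval_X,
      map_one, LinearMap.sub_apply, Module.End.one_apply, Frob_pow_apply, sub_eq_zero]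
  have hBset : (fun x => aeval x (linAssoc p u)) '' {x : GaloisField p n | x ^ p ^ d = x} =
      ⇑(aeval (Frob p n) u) '' ↑(K p n (X ^ d - 1)) := by
    rw [hSset]
    exact Set.image_congr fun x _ => aeval_lin n u x
  -- cardinalities
  have hcardKl : Nat.card (K p n l) = p ^ (d - u.natDegree) := by
    have e1 : K p n l = K p n (gcd l (X ^ n - 1 : Polynomial (ZMod p))) := by
      rw [K_gcd, hKtop, inf_top_eq]
    rw [e1, card_K hn (gcd_dvd_right _ _) hgl0, hg1, hdegm']
  have hcardKd : Nat.card (K p n (X ^ d - 1 : Polynomial (ZMod p))) = p ^ d := by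
    rw [card_K hn hXdXn hXd0, hdegXd]
  have hcardInt : Nat.card ↥(K p n u ⊓ K p n (X ^ d - 1 : Polynomial (ZMod p))) =
      p ^ u.natDegree := by
    have hgcd0 : gcd u (X ^ d - 1 : Polynomial (ZMod p)) ≠ 0 := by
      intro h0; exact hu0 ((gcd_eq_zero_iff _ _).mp h0).1
    rw [← K_gcd, card_K hn ((gcd_dvd_right _ _).trans hXdXn) hgcd0, hg2]
  have him := card_image_ker (aeval (Frob p n) u) (K p n (X ^ d - 1 : Polynomial (ZMod p)))
  have hker : LinearMap.ker (aeval (Frob p n) u) = K p n u := rfl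
  rw [hker, hcardKd, hcardInt] at him
  have hBcard : Nat.card ↑(⇑(aeval (Frob p n) u) '' ↑(K p n (X ^ d - 1 : Polynomial (ZMod p)))) =
      p ^ (d - u.natDegree) := by
    have hppos : 0 < p ^ u.natDegree := pow_pos hp.pos _
    have : p ^ d = p ^ u.natDegree * p ^ (d - u.natDegree) := by
      rw [← pow_add]
      congr 1
      omega
    rw [this] at him
    exact (Nat.eq_of_mul_eq_mul_left hppos him.symm)
  -- inclusion
  have hsub : (fun x => aeval x (linAssoc p u)) '' {x : GaloisField p n | x ^ p ^ d = x} ⊆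
      {x : GaloisField p n | aeval x (linAssoc p l) = 0} := by
    rw [hBset, hAset]
    rintro _ ⟨y, hy, rfl⟩
    show aeval (Frob p n) l (aeval (Frob p n) u y) = 0
    have hy' : aeval (Frob p n) (X ^ d - 1 : Polynomial (ZMod p)) y = 0 := hy
    have hlu' : l * u = -(v * (X ^ d - 1)) := by rw [hlu]; ring
    rw [← Module.End.mul_apply, ← map_mul, hlu', map_neg, map_mul, LinearMap.neg_apply,
      Module.End.mul_apply, hy', map_zero, neg_zero]
  -- conclusion by cardinality
  refine (Set.eq_of_subset_of_ncard_le hsub ?_ ?_).symm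
  · have e1 : {x : GaloisField p n | aeval x (linAssoc p l) = 0}.ncard = p ^ (d - u.natDegree) := by
      rw [hAset, ← Nat.card_coe_set_eq]
      exact hcardKl
    have e2 : ((fun x => aeval x (linAssoc p u)) ''
        {x : GaloisField p n | x ^ p ^ d = x}).ncard = p ^ (d - u.natDegree) := by
      rw [hBset, ← Nat.card_coe_set_eq]
      exact hBcard
    rw [e1, e2]
  · exact Set.toFinite _
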